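/- Gauge freedom and the Lanczos algebraic gauge. Let n ≥ 3, let W_{abcd} be a smooth tensor field on flat ℝⁿ and let L_{abc} be a continuously differentiable tensor field with L_{abc} = L_{[ab]c} satisfying equation (4) for W. Then for every continuously differentiable covector field Φ_a, the tensor field L'_{abc} = L_{abc} + Φ_{[a} η_{b]c} also satisfies L'_{abc} = L'_{[ab]c} and equation (4) for the same W; moreover, if L_{[abc]} = 0 then L'_{[abc]} = 0. In particular, the choice Φ_a = −(2/(n−1)) L_{ab}^{b} produces a Lanczos potential L' for W in the Lanczos algebraic gauge, i.e. with L'_{ab}^{b} = 0. -/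

import Mathlib

open scoped ContDiff

noncomputable section

/-- Partial derivative `∂ᵢ f` of a scalar field on flat `ℝⁿ` (points represented as
`Fin n → ℝ`, standard coordinates) in the `i`-th coordinate direction.  In Cartesian
coordinates on flat space this is the covariant derivative `;i`. -/
def pd {n : ℕ} (i : Fin n) (f : (Fin n → ℝ) → ℝ) : (Fin n → ℝ) → ℝ :=
  fun x => fderiv ℝ f x (Pi.single i 1)

/-- Components `η_{ab}` of the constant diagonal metric with diagonal entries `η a = ±1`;
since the entries are `±1` these coincide with the components `η^{ab}` of the inverse
metric. -/
def gm {n : ℕ} (η : Fin n → ℝ) (a b : Fin n) : ℝ := if a = b then η a else 0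

/-- Antisymmetrization over two index slots. -/
def asym2 {n : ℕ} (T : Fin n → Fin n → ℝ) (a b : Fin n) : ℝ := (T a b - T b a) / 2

/-- Antisymmetrization over three index slots. -/
def asym3 {n : ℕ} (T : Fin n → Fin n → Fin n → ℝ) (a b c : Fin n) : ℝ :=
  (T a b c - T a c b - T b a c + T b c a + T c a b - T c b a) / 6

/-- Simultaneous antisymmetrization over a pair of upper slots and a pair of lower slots. -/
def asym22 {n : ℕ} (T : Fin n → Fin n → Fin n → Fin n → ℝ) (a b c d : Fin n) : ℝ :=
  (T a b c d - T b a c d - T a b d c + T b a d c) / 4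

/-- Simultaneous antisymmetrization over a triple of upper slots and a triple of lower
slots (arguments ordered as `T upper₁ upper₂ upper₃ lower₁ lower₂ lower₃`). -/
def asym33 {n : ℕ} (T : Fin n → Fin n → Fin n → Fin n → Fin n → Fin n → ℝ)
    (a b f c d e : Fin n) : ℝ :=
  asym3 (fun a b f => asym3 (fun c d e => T a b f c d e) c d e) a b f

/-- A Weyl candidate: a 4-tensor field with the index symmetries (3a)–(3d):
antisymmetry in the first and in the second index pair, symmetry under interchange of the
two pairs, vanishing cyclic sum `W_{a[bcd]} = 0`, and vanishing trace `W^a{}_{bad} = 0`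
(the trace being taken with the metric `η`). -/
def WeylCandidate {n : ℕ} (η : Fin n → ℝ)
    (W : (Fin n → ℝ) → Fin n → Fin n → Fin n → Fin n → ℝ) : Prop :=
  (∀ x a b c d, W x a b c d = - W x b a c d) ∧
  (∀ x a b c d, W x a b c d = - W x a b d c) ∧
  (∀ x a b c d, W x a b c d = W x c d a b) ∧
  (∀ x a b c d, asym3 (fun b c d => W x a b c d) b c d = 0) ∧
  (∀ x b d, ∑ a, η a * W x a b a d = 0)

/-- The right-hand side of the Lanczos potential equation (4), in the equivalent fully
lowered form (the free indices `a b`, raised in the paper, are lowered with the invertible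
diagonal metric `η`, which only multiplies each component equation by `η a * η b ≠ 0`).
Each contracted (dummy) index pair carries a factor `η i` coming from the inverse
metric. -/
def rhs4 {n : ℕ} (η : Fin n → ℝ) (L : (Fin n → ℝ) → Fin n → Fin n → Fin n → ℝ)
    (x : Fin n → ℝ) (a b c d : Fin n) : ℝ :=
  -- 2 L^{ab}{}_{[c;d]}
  (pd d (L · a b c) x - pd c (L · a b d) x)
  -- + 2 L_{cd}{}^{[a;b]}
  + (pd b (L · c d a) x - pd a (L · c d b) x)
  -- − (4/(n−2)) δ^{[a}_{[c} ( L^{b]i}{}_{d];i} − L^{b]i}{}_{|i|;d]} + L_{d]i}{}^{b];i} − L_{d]i}{}^{|i|;b]} )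
  - (4 / ((n : ℝ) - 2)) *
      asym22 (fun a b c d =>
        gm η a c *
          ∑ i, η i *
            (pd i (L · b i d) x - pd d (L · b i i) x
              + pd i (L · d i b) x - pd b (L · d i i) x)) a b c d
  -- + (8/((n−2)(n−1))) δ^{a}_{[c} δ^{b}_{d]} L^{ij}{}_{i;j}
  + (8 / (((n : ℝ) - 2) * ((n : ℝ) - 1))) *
      ((gm η a c * gm η b d - gm η a d * gm η b c) / 2) *
      ∑ i, ∑ j, η i * η j * pd j (L · i j i) x

/-- Equation (4): `L` is a Lanczos potential for `W` (fully lowered, equivalent form). -/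
def Eq4 {n : ℕ} (η : Fin n → ℝ)
    (W : (Fin n → ℝ) → Fin n → Fin n → Fin n → Fin n → ℝ)
    (L : (Fin n → ℝ) → Fin n → Fin n → Fin n → ℝ) : Prop :=
  ∀ x a b c d, W x a b c d = rhs4 η L x a b c d

/-- The right-hand side of equation (5) (equation (4) in the Lanczos algebraic gauge
`L_{ab}{}^b = 0`), fully lowered form:
`2 L^{ab}{}_{[c;d]} + 2 L_{cd}{}^{[a;b]} − (4/(n−2)) δ^{[a}_{[c} ( L^{b]i}{}_{d];i} + L_{d]i}{}^{b];i} )`. -/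
def rhs5 {n : ℕ} (η : Fin n → ℝ) (L : (Fin n → ℝ) → Fin n → Fin n → Fin n → ℝ)
    (x : Fin n → ℝ) (a b c d : Fin n) : ℝ :=
  (pd d (L · a b c) x - pd c (L · a b d) x)
  + (pd b (L · c d a) x - pd a (L · c d b) x)
  - (4 / ((n : ℝ) - 2)) *
      asym22 (fun a b c d =>
        gm η a c * ∑ i, η i * (pd i (L · b i d) x + pd i (L · d i b) x)) a b c d

/-- Equation (5). -/
def Eq5 {n : ℕ} (η : Fin n → ℝ)
    (W : (Fin n → ℝ) → Fin n → Fin n → Fin n → Fin n → ℝ)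
    (L : (Fin n → ℝ) → Fin n → Fin n → Fin n → ℝ) : Prop :=
  ∀ x a b c d, W x a b c d = rhs5 η L x a b c d

/-- Constraint (8), fully lowered form:
`W^{[ab}{}_{[cd;e]}{}^{f]} = (1/(n−4)) δ^{[a}_{[c} W^{bf]}{}_{de];i}{}^{i}
 + (2/(n−4)) δ^{[a}_{[c} W^{|i|b}{}_{de];i}{}^{f]} + (2/(n−4)) δ^{[a}_{[c} W^{bf]}{}_{|i|d;e]}{}^{i}
 + (4/((n−3)(n−4))) δ^{[a}_{[c} δ^{b}_{d} W^{f]i}{}_{e]j;i}{}^{j}`. -/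
def Constraint8 {n : ℕ} (η : Fin n → ℝ)
    (W : (Fin n → ℝ) → Fin n → Fin n → Fin n → Fin n → ℝ) : Prop :=
  ∀ x a b f c d e,
    asym33 (fun a b f c d e => pd f (pd e (W · a b c d)) x) a b f c d e =
      (1 / ((n : ℝ) - 4)) *
          asym33 (fun a b f c d e =>
            gm η a c * ∑ i, η i * pd i (pd i (W · b f d e)) x) a b f c d e
      + (2 / ((n : ℝ) - 4)) *
          asym33 (fun a b f c d e =>
            gm η a c * ∑ i, η i * pd f (pd i (W · i b d e)) x) a b f c d e
      + (2 / ((n : ℝ) - 4)) *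
          asym33 (fun a b f c d e =>
            gm η a c * ∑ i, η i * pd i (pd e (W · b f i d)) x) a b f c d e
      + (4 / (((n : ℝ) - 3) * ((n : ℝ) - 4))) *
          asym33 (fun a b f c d e =>
            gm η a c * gm η b d *
              ∑ i, ∑ j, η i * η j * pd j (pd i (W · f i e j)) x) a b f c d e

/-- Constraint (10), fully lowered form:
`W^{[ab}{}_{cd;i}{}^{|i|e]} + 2 W^{[ab}{}_{i[c;d]}{}^{|i|e]}
 + (4/(n−3)) δ^{[a}_{[c} W^{b|i}{}_{d]j;i}{}^{j|e]} = 0`,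
antisymmetrized over the upper indices `a b e` and (where indicated) the lower indices
`c d`. -/
def Constraint10 {n : ℕ} (η : Fin n → ℝ)
    (W : (Fin n → ℝ) → Fin n → Fin n → Fin n → Fin n → ℝ) : Prop :=
  ∀ x a b e c d,
    asym3 (fun a b e =>
      (∑ i, η i * pd e (pd i (pd i (W · a b c d))) x)
      + 2 * asym2 (fun c d =>
            ∑ i, η i * pd e (pd i (pd d (W · a b i c))) x) c d
      + (4 / ((n : ℝ) - 3)) * asym2 (fun c d =>
            gm η a c *
              ∑ i, ∑ j, η i * η j * pd e (pd j (pd i (W · b i d j))) x) c d) a b e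
    = 0

/-- **Gauge freedom and the Lanczos algebraic gauge.**  If `L` (with
`L_{abc} = L_{[ab]c}`) satisfies equation (4) for `W`, then for every `C¹` covector field
`Φ` the tensor field `L'_{abc} = L_{abc} + Φ_{[a} η_{b]c}` again has
`L'_{abc} = L'_{[ab]c}`, satisfies equation (4) for the same `W`, and inherits
`L'_{[abc]} = 0` from `L_{[abc]} = 0`.  Moreover the particular choice
`Φ_a = −(2/(n−1)) L_{ab}{}^b` yields a Lanczos potential for `W` in the Lanczos algebraic
gauge `L'_{ab}{}^b = 0`. -/
lemma gm_symm (η : Fin n → ℝ) (a b : Fin n) : gm η a b = gm η b a := by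
  rcases eq_or_ne a b with h | h
  · subst h; rfl
  · simp [gm, h, h.symm]
lemma eta_sq (η : Fin n → ℝ) (hη : ∀ i, η i = 1 ∨ η i = -1) (i : Fin n) :
    η i * η i = 1 := by rcases hη i with h | h <;> rw [h] <;> norm_num
lemma pick1 (η : Fin n → ℝ) (hη : ∀ i, η i = 1 ∨ η i = -1) (f : Fin n → ℝ) (q : Fin n) :
    ∑ i, η i * (f i * gm η i q) = f q := by
  rw [Finset.sum_eq_single q]
  · simp only [gm, eq_self_iff_true, if_true]
    linear_combination f q * eta_sq η hη q
  · intro b _ hb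
    simp [gm, hb]
  · simp
lemma pick2 (η : Fin n → ℝ) (hη : ∀ i, η i = 1 ∨ η i = -1) (f : Fin n → ℝ) (p : Fin n) :
    ∑ i, η i * (f i * gm η p i) = f p := by
  rw [Finset.sum_eq_single p]
  · simp only [gm, eq_self_iff_true, if_true]
    linear_combination f p * eta_sq η hη p
  · intro b _ hb
    simp [gm, hb.symm]
  · simp
lemma trace_n (η : Fin n → ℝ) (hη : ∀ i, η i = 1 ∨ η i = -1) :
    ∑ i, η i * gm η i i = (n : ℝ) := by
  rw [Finset.sum_congr rfl (fun i _ => show η i * gm η i i = 1 by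
    simp only [gm, eq_self_iff_true, if_true]; exact eta_sq η hη i)]
  simp

lemma alg_sum (η : Fin n → ℝ) (hη : ∀ i, η i = 1 ∨ η i = -1)
    (Q : Fin n → Fin n → ℝ) (P1 P2 P3 P4 : Fin n → ℝ) (p q : Fin n) :
    ∑ i, η i * (P1 i + (Q p i * gm η i q - Q i i * gm η p q) / 2
      - (P2 i + (Q p q * gm η i i - Q i q * gm η p i) / 2)
      + (P3 i + (Q q i * gm η i p - Q i i * gm η q p) / 2)
      - (P4 i + (Q q p * gm η i i - Q i p * gm η q i) / 2))
    = (∑ i, η i * (P1 i - P2 i + P3 i - P4 i))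
      + ((2 - (n : ℝ)) * (Q p q + Q q p)
          - 2 * gm η p q * ∑ i, η i * Q i i) / 2 := by
  have step : ∀ i ∈ Finset.univ, η i * (P1 i + (Q p i * gm η i q - Q i i * gm η p q) / 2
      - (P2 i + (Q p q * gm η i i - Q i q * gm η p i) / 2)
      + (P3 i + (Q q i * gm η i p - Q i i * gm η q p) / 2)
      - (P4 i + (Q q p * gm η i i - Q i p * gm η q i) / 2))
      = η i * (P1 i - P2 i + P3 i - P4 i)
        + (η i * (Q p i * gm η i q) - gm η p q * (η i * Q i i)
           - Q p q * (η i * gm η i i) + η i * (Q i q * gm η p i)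
           + η i * (Q q i * gm η i p) - gm η q p * (η i * Q i i)
           - Q q p * (η i * gm η i i) + η i * (Q i p * gm η q i)) / 2 :=
    fun i _ => by ring
  rw [Finset.sum_congr rfl step, Finset.sum_add_distrib]
  congr 1
  rw [← Finset.sum_div]
  congr 1
  simp only [Finset.sum_add_distrib, Finset.sum_sub_distrib]
  have e1 : ∑ i, η i * (Q p i * gm η i q) = Q p q := pick1 η hη (fun i => Q p i) q
  have e2 : ∑ i, gm η p q * (η i * Q i i) = gm η p q * ∑ i, η i * Q i i :=
    (Finset.mul_sum _ _ _).symm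
  have e3 : ∑ i, Q p q * (η i * gm η i i) = Q p q * (n : ℝ) := by
    rw [← Finset.mul_sum, trace_n η hη]
  have e4 : ∑ i, η i * (Q i q * gm η p i) = Q p q := pick2 η hη (fun i => Q i q) p
  have e5 : ∑ i, η i * (Q q i * gm η i p) = Q q p := pick1 η hη (fun i => Q q i) p
  have e6 : ∑ i, gm η q p * (η i * Q i i) = gm η q p * ∑ i, η i * Q i i :=
    (Finset.mul_sum _ _ _).symm
  have e7 : ∑ i, Q q p * (η i * gm η i i) = Q q p * (n : ℝ) := by
    rw [← Finset.mul_sum, trace_n η hη]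
  have e8 : ∑ i, η i * (Q i p * gm η q i) = Q q p := pick2 η hη (fun i => Q i p) q
  rw [e1, e2, e3, e4, e5, e6, e7, e8, gm_symm η q p]
  ring

lemma alg_double (η : Fin n → ℝ) (hη : ∀ i, η i = 1 ∨ η i = -1)
    (Q : Fin n → Fin n → ℝ) (P : Fin n → Fin n → ℝ) :
    ∑ i, ∑ j, η i * η j * (P i j + (Q i j * gm η j i - Q j j * gm η i i) / 2)
    = (∑ i, ∑ j, η i * η j * P i j)
      + (1 - (n : ℝ)) * (∑ i, η i * Q i i) / 2 := by
  have inner : ∀ i ∈ (Finset.univ : Finset (Fin n)),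
      ∑ j, η i * η j * (P i j + (Q i j * gm η j i - Q j j * gm η i i) / 2)
      = (∑ j, η i * η j * P i j)
        + (η i * Q i i - η i * gm η i i * ∑ j, η j * Q j j) / 2 := by
    intro i _
    have step : ∀ j ∈ Finset.univ,
        η i * η j * (P i j + (Q i j * gm η j i - Q j j * gm η i i) / 2)
        = η i * η j * P i j
          + (η i * (η j * (Q i j * gm η j i)) - (η i * gm η i i) * (η j * Q j j)) / 2 :=
      fun j _ => by ring
    rw [Finset.sum_congr rfl step, Finset.sum_add_distrib]
    congr 1
    rw [← Finset.sum_div]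
    congr 1
    rw [Finset.sum_sub_distrib, ← Finset.mul_sum, ← Finset.mul_sum,
      pick1 η hη (fun j => Q i j) i]
  rw [Finset.sum_congr rfl inner, Finset.sum_add_distrib]
  congr 1
  rw [← Finset.sum_div]
  congr 1
  rw [Finset.sum_sub_distrib, ← Finset.sum_mul, trace_n η hη]
  ring

lemma pd_gauge {n : ℕ} (f g h : (Fin n → ℝ) → ℝ) (x : Fin n → ℝ) (j : Fin n)
    (hf : DifferentiableAt ℝ f x) (hg : DifferentiableAt ℝ g x)
    (hh : DifferentiableAt ℝ h x) (α β : ℝ) :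
    pd j (fun y => f y + (g y * α - h y * β) / 2) x
      = pd j f x + (pd j g x * α - pd j h x * β) / 2 := by
  have e : (fun y => f y + (g y * α - h y * β) / 2)
      = fun y => f y + (2:ℝ)⁻¹ • (g y * α - h y * β) := by
    funext y; simp [smul_eq_mul]; ring
  have H : HasFDerivAt (fun y => f y + (g y * α - h y * β) / 2)
      (fderiv ℝ f x + (2:ℝ)⁻¹ • (α • fderiv ℝ g x - β • fderiv ℝ h x)) x := by
    rw [e]
    exact hf.hasFDerivAt.add
      (((hg.hasFDerivAt.mul_const α).sub (hh.hasFDerivAt.mul_const β)).const_smul (2:ℝ)⁻¹)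
  unfold pd
  rw [H.fderiv]
  simp only [ContinuousLinearMap.add_apply, ContinuousLinearMap.smul_apply,
    ContinuousLinearMap.sub_apply, smul_eq_mul]
  ring

lemma eq4_gauge {n : ℕ} (hn : 3 ≤ n) (η : Fin n → ℝ) (hη : ∀ i, η i = 1 ∨ η i = -1)
    (L : (Fin n → ℝ) → Fin n → Fin n → Fin n → ℝ)
    (hLC1 : ∀ a b c, ContDiff ℝ 1 (fun x => L x a b c))
    (Φ : (Fin n → ℝ) → Fin n → ℝ) (hΦ : ∀ a, ContDiff ℝ 1 (fun x => Φ x a))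
    (x : Fin n → ℝ) (a b c d : Fin n) :
    rhs4 η (fun x a b c => L x a b c + (Φ x a * gm η b c - Φ x b * gm η a c) / 2) x a b c d
      = rhs4 η L x a b c d := by
  have hLd : ∀ a b c, DifferentiableAt ℝ (fun y => L y a b c) x :=
    fun a b c => ((hLC1 a b c).differentiable one_ne_zero).differentiableAt
  have hΦd : ∀ a, DifferentiableAt ℝ (fun y => Φ y a) x :=
    fun a => ((hΦ a).differentiable one_ne_zero).differentiableAt
  have hpd : ∀ (j a b c : Fin n),
      pd j (fun y => L y a b c + (Φ y a * gm η b c - Φ y b * gm η a c) / 2) x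
        = pd j (fun y => L y a b c) x
          + (pd j (fun y => Φ y a) x * gm η b c - pd j (fun y => Φ y b) x * gm η a c) / 2 :=
    fun j a b c => pd_gauge _ _ _ _ _ (hLd a b c) (hΦd a) (hΦd b) _ _
  have hsum : ∀ p q : Fin n,
      (∑ i, η i * (pd i (fun y => L y p i q) x
          + (pd i (fun y => Φ y p) x * gm η i q - pd i (fun y => Φ y i) x * gm η p q) / 2
        - (pd q (fun y => L y p i i) x
          + (pd q (fun y => Φ y p) x * gm η i i - pd q (fun y => Φ y i) x * gm η p i) / 2)
        + (pd i (fun y => L y q i p) x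
          + (pd i (fun y => Φ y q) x * gm η i p - pd i (fun y => Φ y i) x * gm η q p) / 2)
        - (pd p (fun y => L y q i i) x
          + (pd p (fun y => Φ y q) x * gm η i i - pd p (fun y => Φ y i) x * gm η q i) / 2)))
      = (∑ i, η i * (pd i (fun y => L y p i q) x - pd q (fun y => L y p i i) x
          + pd i (fun y => L y q i p) x - pd p (fun y => L y q i i) x))
        + ((2 - (n : ℝ)) * (pd q (fun y => Φ y p) x + pd p (fun y => Φ y q) x)
            - 2 * gm η p q * ∑ i, η i * pd i (fun y => Φ y i) x) / 2 :=
    fun p q => alg_sum η hη (fun r j => pd j (fun y => Φ y r) x)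
      (fun i => pd i (fun y => L y p i q) x) (fun i => pd q (fun y => L y p i i) x)
      (fun i => pd i (fun y => L y q i p) x) (fun i => pd p (fun y => L y q i i) x) p q
  have hdouble :
      (∑ i, ∑ j, η i * η j * (pd j (fun y => L y i j i) x
        + (pd j (fun y => Φ y i) x * gm η j i - pd j (fun y => Φ y j) x * gm η i i) / 2))
      = (∑ i, ∑ j, η i * η j * pd j (fun y => L y i j i) x)
        + (1 - (n : ℝ)) * (∑ i, η i * pd i (fun y => Φ y i) x) / 2 :=
    alg_double η hη (fun r j => pd j (fun y => Φ y r) x)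
      (fun i j => pd j (fun y => L y i j i) x)
  have h3 : (3 : ℝ) ≤ (n : ℝ) := by exact_mod_cast hn
  have hn2 : ((n : ℝ) - 2) ≠ 0 := ne_of_gt (by linarith)
  have hn1 : ((n : ℝ) - 1) ≠ 0 := ne_of_gt (by linarith)
  simp only [rhs4, asym22, hpd]
  rw [hsum b d, hsum a d, hsum b c, hsum a c, hdouble,
    gm_symm η d a, gm_symm η c a, gm_symm η d b, gm_symm η c b]
  field_simp
  ring

lemma asym_gauge {n : ℕ} (η : Fin n → ℝ) (L : (Fin n → ℝ) → Fin n → Fin n → Fin n → ℝ)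
    (hLasym : ∀ x a b c, L x a b c = - L x b a c) (Φ : (Fin n → ℝ) → Fin n → ℝ) :
    ∀ x a b c, (L x a b c + (Φ x a * gm η b c - Φ x b * gm η a c) / 2)
      = -(L x b a c + (Φ x b * gm η a c - Φ x a * gm η b c) / 2) :=
  fun x a b c => by linear_combination hLasym x a b c

lemma asym3_gauge {n : ℕ} (η : Fin n → ℝ) (L : (Fin n → ℝ) → Fin n → Fin n → Fin n → ℝ)
    (Φ : (Fin n → ℝ) → Fin n → ℝ)
    (h : ∀ x a b c, asym3 (fun a b c => L x a b c) a b c = 0) :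
    ∀ x a b c, asym3 (fun a b c =>
      L x a b c + (Φ x a * gm η b c - Φ x b * gm η a c) / 2) a b c = 0 := by
  intro x a b c
  have h0 := h x a b c
  simp only [asym3] at h0 ⊢
  rw [gm_symm η c b, gm_symm η c a, gm_symm η b a]
  linear_combination h0

lemma trace_zero {n : ℕ} (hn : 3 ≤ n) (η : Fin n → ℝ) (hη : ∀ i, η i = 1 ∨ η i = -1)
    (L : (Fin n → ℝ) → Fin n → Fin n → Fin n → ℝ) (x : Fin n → ℝ) (a : Fin n) :
    ∑ b, η b * (L x a b b
      + ((-(2 / ((n : ℝ) - 1)) * ∑ c, η c * L x a c c) * gm η b b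
         - (-(2 / ((n : ℝ) - 1)) * ∑ c, η c * L x b c c) * gm η a b) / 2) = 0 := by
  have step : ∀ b ∈ (Finset.univ : Finset (Fin n)),
      η b * (L x a b b
        + ((-(2 / ((n : ℝ) - 1)) * ∑ c, η c * L x a c c) * gm η b b
           - (-(2 / ((n : ℝ) - 1)) * ∑ c, η c * L x b c c) * gm η a b) / 2)
      = η b * L x a b b
        + ((-(2 / ((n : ℝ) - 1)) * ∑ c, η c * L x a c c) * (η b * gm η b b)
           - η b * ((-(2 / ((n : ℝ) - 1)) * ∑ c, η c * L x b c c) * gm η a b)) / 2 :=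
    fun b _ => by ring
  rw [Finset.sum_congr rfl step, Finset.sum_add_distrib, ← Finset.sum_div,
    Finset.sum_sub_distrib, ← Finset.mul_sum, trace_n η hη]
  have e : ∑ b, η b * ((-(2 / ((n : ℝ) - 1)) * ∑ c, η c * L x b c c) * gm η a b)
      = -(2 / ((n : ℝ) - 1)) * ∑ c, η c * L x a c c :=
    pick2 η hη (fun b => -(2 / ((n : ℝ) - 1)) * ∑ c, η c * L x b c c) a
  rw [e]
  have h3 : (3 : ℝ) ≤ (n : ℝ) := by exact_mod_cast hn
  have hn1 : ((n : ℝ) - 1) ≠ 0 := ne_of_gt (by linarith)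
  field_simp
  ring

theorem lanczos_gauge_freedom
    (n : ℕ) (hn : 3 ≤ n) (η : Fin n → ℝ) (hη : ∀ i, η i = 1 ∨ η i = -1)
    (W : (Fin n → ℝ) → Fin n → Fin n → Fin n → Fin n → ℝ)
    (hWsmooth : ∀ a b c d, ContDiff ℝ ∞ (fun x => W x a b c d))
    (L : (Fin n → ℝ) → Fin n → Fin n → Fin n → ℝ)
    (hLC1 : ∀ a b c, ContDiff ℝ 1 (fun x => L x a b c))
    (hLasym : ∀ x a b c, L x a b c = - L x b a c)
    (hEq4 : Eq4 η W L) :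
    (∀ Φ : (Fin n → ℝ) → Fin n → ℝ, (∀ a, ContDiff ℝ 1 (fun x => Φ x a)) →
      -- L'_{abc} = L_{abc} + Φ_{[a} η_{b]c}
      let L' : (Fin n → ℝ) → Fin n → Fin n → Fin n → ℝ :=
        fun x a b c => L x a b c + (Φ x a * gm η b c - Φ x b * gm η a c) / 2
      (∀ x a b c, L' x a b c = - L' x b a c) ∧
      Eq4 η W L' ∧
      ((∀ x a b c, asym3 (fun a b c => L x a b c) a b c = 0) →
        ∀ x a b c, asym3 (fun a b c => L' x a b c) a b c = 0))
    ∧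
    -- the particular choice Φ_a = −(2/(n−1)) L_{ab}{}^b gives the algebraic gauge
    (let Φ₀ : (Fin n → ℝ) → Fin n → ℝ :=
        fun x a => -(2 / ((n : ℝ) - 1)) * ∑ b, η b * L x a b b
     let L' : (Fin n → ℝ) → Fin n → Fin n → Fin n → ℝ :=
        fun x a b c => L x a b c + (Φ₀ x a * gm η b c - Φ₀ x b * gm η a c) / 2
     (∀ x a b c, L' x a b c = - L' x b a c) ∧
     Eq4 η W L' ∧
     (∀ x a, ∑ b, η b * L' x a b b = 0)) := by
  constructor
  · intro Φ hΦ
    exact ⟨asym_gauge η L hLasym Φ,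
      fun x a b c d => (hEq4 x a b c d).trans (eq4_gauge hn η hη L hLC1 Φ hΦ x a b c d).symm,
      fun h => asym3_gauge η L Φ h⟩
  · have hΦ0 : ∀ a, ContDiff ℝ 1 (fun x => -(2 / ((n : ℝ) - 1)) * ∑ b, η b * L x a b b) :=
      fun a => contDiff_const.mul (ContDiff.sum fun b _ => contDiff_const.mul (hLC1 a b b))
    exact ⟨asym_gauge η L hLasym _,
      fun x a b c d => (hEq4 x a b c d).trans (eq4_gauge hn η hη L hLC1 _ hΦ0 x a b c d).symm,
      fun x a => trace_zero hn η hη L x a⟩
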